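/- Let μ₁,…,μₙ be nonzero complex numbers such that for some ℓ ∈ Ω = {ℓ ∈ ℕⁿ : ∏ μₖ^{ℓₖ} = 1} one has ℓₘ ≥ 1. Let φ₁,…,φₙ be formal power series in n variables with φₖ = μₖxₖ + (higher order terms), and suppose ∏ₖ φₖ^{ℓₖ} = ∏ₖ xₖ^{ℓₖ}. Then xₘ divides φₘ in the formal power series ring. -/

import Mathlib

open Finset MvPowerSeries

theorem coeff_fun_apply {σ : Type*} {R : Type*} [CommSemiring R] (f : (σ →₀ ℕ) → R)
    (d : σ →₀ ℕ) : MvPowerSeries.coeff (R := R) d f = f d :=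
  rfl

theorem add_fun_apply {σ : Type*} {R : Type*} [CommSemiring R] (f g : (σ →₀ ℕ) → R)
    (d : σ →₀ ℕ) :
    (HAdd.hAdd (α := MvPowerSeries σ R) (β := MvPowerSeries σ R) (γ := MvPowerSeries σ R) f g) d
      = f d + g d :=
  rfl

/-- The ring hom on multivariate power series that substitutes `0` for the
variable `s` (i.e. kills every coefficient of a monomial involving `s`). -/
noncomputable def killVar {σ : Type*} {R : Type*} [CommSemiring R] (s : σ) :
    MvPowerSeries σ R →+* MvPowerSeries σ R where
  toFun φ := show MvPowerSeries σ R from fun d => if d s = 0 then MvPowerSeries.coeff d φ else 0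
  map_one' := by
    classical
    apply MvPowerSeries.ext
    intro d
    show (if d s = 0 then MvPowerSeries.coeff d (1 : MvPowerSeries σ R) else 0) = _
    beta_reduce
    by_cases hd : d s = 0
    · rw [if_pos hd]
    · have h0 : d ≠ 0 := fun h => hd (by simp [h])
      rw [if_neg hd, MvPowerSeries.coeff_one, if_neg h0]
  map_mul' φ ψ := by
    classical
    apply MvPowerSeries.ext
    intro d
    show (if d s = 0 then MvPowerSeries.coeff d (φ * ψ) else 0) = _
    by_cases hd : d s = 0
    · rw [if_pos hd]
      rw [MvPowerSeries.coeff_mul, MvPowerSeries.coeff_mul]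
      apply Finset.sum_congr rfl
      rintro ⟨i, j⟩ hij
      rw [Finset.HasAntidiagonal.mem_antidiagonal] at hij
      have hij' : i s + j s = d s := by rw [← hij]; simp
      have hi : i s = 0 := by omega
      have hj : j s = 0 := by omega
      simp only [MvPowerSeries.coeff_apply, coeff_fun_apply, hi, hj, if_true]
    · rw [if_neg hd]
      rw [MvPowerSeries.coeff_mul]
      symm
      apply Finset.sum_eq_zero
      rintro ⟨i, j⟩ hij
      rw [Finset.HasAntidiagonal.mem_antidiagonal] at hij
      have hij' : i s + j s = d s := by rw [← hij]; simp
      by_cases hi : i s = 0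
      · have hj : j s ≠ 0 := by omega
        simp only [MvPowerSeries.coeff_apply, coeff_fun_apply, hj, if_false, mul_zero]
      · simp only [MvPowerSeries.coeff_apply, coeff_fun_apply, hi, if_false, zero_mul]
  map_zero' := by
    classical
    apply MvPowerSeries.ext
    intro d
    show (if d s = 0 then MvPowerSeries.coeff d (0 : MvPowerSeries σ R) else 0) = _
    beta_reduce
    simp
  map_add' φ ψ := by
    classical
    apply MvPowerSeries.ext
    intro d
    simp only [map_add, MvPowerSeries.coeff_apply, coeff_fun_apply, Pi.add_apply, add_fun_apply]
    by_cases hd : d s = 0 <;> simp [hd]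

theorem coeff_killVar {σ : Type*} {R : Type*} [CommSemiring R] (s : σ)
    (φ : MvPowerSeries σ R) (d : σ →₀ ℕ) :
    MvPowerSeries.coeff d (killVar s φ) = if d s = 0 then MvPowerSeries.coeff d φ else 0 :=
  rfl

theorem killVar_eq_zero_iff {σ : Type*} {R : Type*} [CommSemiring R] (s : σ)
    (φ : MvPowerSeries σ R) :
    killVar s φ = 0 ↔ (MvPowerSeries.X s : MvPowerSeries σ R) ∣ φ := by
  rw [MvPowerSeries.X_dvd_iff]
  constructor
  · intro h d hd
    have h2 := congrArg (MvPowerSeries.coeff d) h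
    rw [coeff_killVar, if_pos hd, map_zero] at h2
    exact h2
  · intro h
    apply MvPowerSeries.ext
    intro d
    rw [coeff_killVar, map_zero]
    by_cases hd : d s = 0
    · rw [if_pos hd]; exact h d hd
    · rw [if_neg hd]

/-- Division lemma, Case 1: if `ℓ ∈ Ω` has `ℓₘ ≥ 1` and the formal
diffeomorphism `Φ = (φ₁,…,φₙ)`, with `φₖ = μₖxₖ + h.o.t.`, preserves the
monomial `x^ℓ` exactly, i.e. `∏ₖ φₖ^{ℓₖ} = ∏ₖ xₖ^{ℓₖ}`, then `xₘ ∣ φₘ`. -/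
theorem stmt_8 (n : ℕ) (μ : Fin n → ℂ) (hμ : ∀ k, μ k ≠ 0)
    (ℓ : Fin n → ℕ) (hΩ : ∏ k, μ k ^ ℓ k = 1)
    (m : Fin n) (hm : 1 ≤ ℓ m)
    (φ : Fin n → MvPowerSeries (Fin n) ℂ)
    (hconst : ∀ k, MvPowerSeries.constantCoeff (φ k) = 0)
    (hlin : ∀ k j, MvPowerSeries.coeff (Finsupp.single j 1) (φ k)
      = if j = k then μ k else 0)
    (hpres : ∏ k, φ k ^ ℓ k = ∏ k, (MvPowerSeries.X k : MvPowerSeries (Fin n) ℂ) ^ ℓ k) :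
    (MvPowerSeries.X m : MvPowerSeries (Fin n) ℂ) ∣ φ m := by
  have hXdvd : (MvPowerSeries.X m : MvPowerSeries (Fin n) ℂ) ∣
      ∏ k, (MvPowerSeries.X k : MvPowerSeries (Fin n) ℂ) ^ ℓ k :=
    dvd_trans (dvd_pow_self _ (by omega : ℓ m ≠ 0)) (Finset.dvd_prod_of_mem _ (Finset.mem_univ m))
  have h0 : killVar m (∏ k, φ k ^ ℓ k) = 0 := by
    rw [hpres, killVar_eq_zero_iff]
    exact hXdvd
  rw [map_prod] at h0
  simp only [map_pow] at h0
  obtain ⟨k, -, hk⟩ := Finset.prod_eq_zero_iff.mp h0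
  have hk0 : killVar m (φ k) = 0 := pow_eq_zero_iff'.mp hk |>.1
  by_cases hkm : k = m
  · rw [← killVar_eq_zero_iff]
    rw [hkm] at hk0
    exact hk0
  · exfalso
    have hdvd := (killVar_eq_zero_iff m (φ k)).mp hk0
    rw [MvPowerSeries.X_dvd_iff] at hdvd
    have hsk : (Finsupp.single k 1) m = 0 := by
      rw [Finsupp.single_apply, if_neg hkm]
    have h3 := hdvd (Finsupp.single k 1) hsk
    rw [hlin k k, if_pos rfl] at h3
    exact hμ k h3
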